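/- In the symmetric-channel mode-pairing scheme with click probability p ≈ η_s μ and unbounded pairing interval (l → ∞), the pairing rate scales as O(√η): r_p = p/2 = η_s μ / 2 where η = η_s², so r_p = (μ/2)√η. -/

import Mathlib

open Filter Topology

/-- With a symmetric channel (`η = η_s²`, i.e. `η_s = √η`), click probability
`p = η_s μ` and unbounded pairing interval `l → ∞`, the pairing rate
`r_p(p,l) = (1/(p(1-(1-p)^l)) + 1/p)⁻¹` converges to `p/2 = (μ/2)√η`,
i.e. it scales as `O(√η)`. -/
theorem pairing_rate_sqrt_eta_scaling (η ηs μ p : ℝ)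
    (hη : 0 < η) (hη1 : η ≤ 1) (hμ : 0 < μ)
    (hηs : ηs = Real.sqrt η) (hp : p = ηs * μ) (hp1 : p < 1) :
    Tendsto (fun l : ℕ => (1 / (p * (1 - (1 - p) ^ l)) + 1 / p)⁻¹)
      atTop (𝓝 ((μ / 2) * Real.sqrt η)) := by
  have hηs0 : 0 < ηs := hηs ▸ Real.sqrt_pos.mpr hη
  have hp0 : 0 < p := hp ▸ mul_pos hηs0 hμ
  have habs : |1 - p| < 1 := by rw [abs_lt]; constructor <;> linarith
  have hpow : Tendsto (fun l : ℕ => (1 - p) ^ l) atTop (𝓝 0) :=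
    tendsto_pow_atTop_nhds_zero_of_abs_lt_one habs
  have h1 : Tendsto (fun l : ℕ => 1 / (p * (1 - (1 - p) ^ l)) + 1 / p) atTop
      (𝓝 (1 / (p * (1 - 0)) + 1 / p)) := by
    refine Tendsto.add ?_ tendsto_const_nhds
    exact (tendsto_const_nhds.div ((tendsto_const_nhds.sub hpow).const_mul p)
      (by simp [hp0.ne']))
  have h2 := h1.inv₀ (by
    have : 1 / (p * (1 - 0)) + 1 / p = 2 / p := by ring
    rw [this]
    positivity)
  convert h2 using 2
  have : 1 / (p * (1 - 0)) + 1 / p = 2 / p := by ring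
  rw [this, hp, hηs]
  field_simp
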